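/- For any graph G, every open packing of G is a 2-limited packing; hence ρ⁰(G) ≤ L_2(G). Moreover, for any tree T of order at least 2, L_2(T) ≤ 2ρ⁰(T). -/

import Mathlib

open Finset

/-- `B` is a `k`-limited packing in `G`: every closed neighbourhood contains
at most `k` vertices of `B`. -/
def limPack {V : Type*} [Fintype V] [DecidableEq V] (G : SimpleGraph V)
    [DecidableRel G.Adj] (k : ℕ) (B : Finset V) : Prop :=
  ∀ v : V, (insert v (G.neighborFinset v) ∩ B).card ≤ k

/-- The `k`-limited packing number `L_k(G)`. -/
noncomputable def limPackNum {V : Type*} [Fintype V] [DecidableEq V] (G : SimpleGraph V)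
    [DecidableRel G.Adj] (k : ℕ) : ℕ :=
  sSup {n | ∃ B : Finset V, limPack G k B ∧ B.card = n}

/-- `S` is an open packing: every open neighbourhood contains at most one vertex of `S`. -/
def openPack {V : Type*} [Fintype V] [DecidableEq V] (G : SimpleGraph V)
    [DecidableRel G.Adj] (S : Finset V) : Prop :=
  ∀ v : V, (G.neighborFinset v ∩ S).card ≤ 1

/-- The open packing number. -/
noncomputable def openPackNum {V : Type*} [Fintype V] [DecidableEq V] (G : SimpleGraph V)
    [DecidableRel G.Adj] : ℕ :=
  sSup {n | ∃ S : Finset V, openPack G S ∧ S.card = n}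

namespace OPL2Aux

variable {V : Type*} [Fintype V] [DecidableEq V]

/-- Atom: existence of a partial dominating set `D` and partial open packing `S`
inside the vertex set `W`, with root state flags and slack `k`. -/
def At (G : SimpleGraph V) [DecidableRel G.Adj] (W : Finset V) (r : V)
    (i d a b : Bool) (k : ℤ) : Prop :=
  ∃ D S : Finset V, D ⊆ W ∧ S ⊆ W ∧
    (i = true → r ∈ D) ∧
    (∀ v ∈ W, (d = true ∨ v ≠ r) → ∃ u ∈ D, u = v ∨ G.Adj u v) ∧
    (∀ v ∈ W, (G.neighborFinset v ∩ S).card ≤ 1) ∧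
    ((r ∈ S) ↔ a = true) ∧
    ((G.neighborFinset r ∩ S = ∅) ↔ b = true) ∧
    (D.card : ℤ) + k ≤ (S.card : ℤ)

def Phi (G : SimpleGraph V) [DecidableRel G.Adj] (W : Finset V) (r : V) : Prop :=
  (At G W r true true true true 0 ∧ At G W r true true false true (-1) ∧
    At G W r false false true true 1 ∧ At G W r false false false true 0) ∨
  (At G W r true true false true (-1) ∧ At G W r true true false false 0) ∨
  (At G W r true true false true (-1) ∧ At G W r false true false true 0)

lemma phi_singleton (G : SimpleGraph V) [DecidableRel G.Adj] (r : V) : Phi G {r} r := by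
  have hnr : ∀ S : Finset V, S ⊆ {r} → G.neighborFinset r ∩ S = ∅ := by
    intro S hS
    rw [Finset.eq_empty_iff_forall_notMem]
    intro y hy
    rw [Finset.mem_inter] at hy
    have := Finset.mem_singleton.mp (hS hy.2)
    subst this
    exact G.irrefl ((SimpleGraph.mem_neighborFinset _ _ _).mp hy.1)
  have hop : ∀ S : Finset V, S ⊆ {r} → ∀ v ∈ ({r} : Finset V),
      (G.neighborFinset v ∩ S).card ≤ 1 := by
    intro S hS v hv
    rw [Finset.mem_singleton] at hv; subst hv
    rw [hnr S hS]; simp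
  left
  refine ⟨⟨{r}, {r}, le_refl _, le_refl _, fun _ => Finset.mem_singleton_self r,
      ?_, hop _ (le_refl _), by simp, by simp [hnr {r} (le_refl _)], by simp⟩,
    ⟨{r}, ∅, le_refl _, Finset.empty_subset _, fun _ => Finset.mem_singleton_self r,
      ?_, hop _ (Finset.empty_subset _), by simp, by simp, by simp⟩,
    ⟨∅, {r}, Finset.empty_subset _, le_refl _, by simp, ?_,
      hop _ (le_refl _), by simp, by simp [hnr {r} (le_refl _)], by simp⟩,
    ⟨∅, ∅, Finset.empty_subset _, Finset.empty_subset _, by simp, ?_,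
      hop _ (Finset.empty_subset _), by simp, by simp, by simp⟩⟩
  · intro v hv _
    rw [Finset.mem_singleton] at hv
    exact ⟨r, Finset.mem_singleton_self r, Or.inl hv.symm⟩
  · intro v hv _
    rw [Finset.mem_singleton] at hv
    exact ⟨r, Finset.mem_singleton_self r, Or.inl hv.symm⟩
  · intro v hv hcond
    rw [Finset.mem_singleton] at hv
    rcases hcond with h | h
    · exact absurd h (by simp)
    · exact absurd hv h
  · intro v hv hcond
    rw [Finset.mem_singleton] at hv
    rcases hcond with h | h
    · exact absurd h (by simp)
    · exact absurd hv h


lemma glue (G : SimpleGraph V) [DecidableRel G.Adj] {A B : Finset V} {r c : V}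
    (hdisj : Disjoint A B) (hrA : r ∈ A) (hcB : c ∈ B) (hrc : G.Adj r c)
    (hcross : ∀ x ∈ A, ∀ y ∈ B, G.Adj x y → x = r ∧ y = c)
    {i1 d1 a1 b1 i2 d2 a2 b2 d3 b3 : Bool} {k1 k2 k3 : ℤ}
    (h1 : At G A r i1 d1 a1 b1 k1) (h2 : At G B c i2 d2 a2 b2 k2)
    (hcb1 : a2 = true → b1 = true) (hcb2 : a1 = true → b2 = true)
    (hcdom : d2 = true ∨ i1 = true)
    (hrdom : d3 = true → (d1 = true ∨ i1 = true ∨ i2 = true))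
    (hb3 : b3 = (b1 && !a2)) (hk3 : k3 ≤ k1 + k2) :
    At G (A ∪ B) r i1 d3 a1 b3 k3 := by
  obtain ⟨D1, S1, hD1W, hS1W, hi1, hdom1, hop1, ha1, hbb1, hk1⟩ := h1
  obtain ⟨D2, S2, hD2W, hS2W, hi2, hdom2, hop2, ha2, hbb2, hk2⟩ := h2
  have hrB : r ∉ B := fun h => (Finset.disjoint_left.mp hdisj hrA) h
  have hcA : c ∉ A := fun h => Finset.disjoint_left.mp hdisj h hcB
  have hS2A : ∀ v ∈ A, v ≠ r → G.neighborFinset v ∩ S2 = ∅ := by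
    intro v hv hvr
    rw [Finset.eq_empty_iff_forall_notMem]
    intro y hy
    rw [Finset.mem_inter, SimpleGraph.mem_neighborFinset] at hy
    exact hvr ((hcross v hv y (hS2W hy.2) hy.1).1)
  have hNrS2 : G.neighborFinset r ∩ S2 ⊆ {c} := by
    intro y hy
    rw [Finset.mem_inter, SimpleGraph.mem_neighborFinset] at hy
    rw [Finset.mem_singleton]
    exact (hcross r hrA y (hS2W hy.2) hy.1).2
  have hS1B : ∀ v ∈ B, v ≠ c → G.neighborFinset v ∩ S1 = ∅ := by
    intro v hv hvc
    rw [Finset.eq_empty_iff_forall_notMem]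
    intro y hy
    rw [Finset.mem_inter, SimpleGraph.mem_neighborFinset] at hy
    exact hvc (hcross y (hS1W hy.2) v hv hy.1.symm).2
  have hNcS1 : G.neighborFinset c ∩ S1 ⊆ {r} := by
    intro y hy
    rw [Finset.mem_inter, SimpleGraph.mem_neighborFinset] at hy
    rw [Finset.mem_singleton]
    exact (hcross y (hS1W hy.2) c hcB hy.1.symm).1
  have hs2iff : (G.neighborFinset r ∩ S2 = ∅) ↔ a2 = false := by
    constructor
    · intro h
      by_contra hh
      have ha2' : a2 = true := by revert hh; cases a2 <;> simp
      have hc' : c ∈ G.neighborFinset r ∩ S2 :=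
        Finset.mem_inter.mpr ⟨(SimpleGraph.mem_neighborFinset _ _ _).mpr hrc, ha2.mpr ha2'⟩
      rw [h] at hc'
      exact absurd hc' (Finset.notMem_empty c)
    · intro h
      rw [Finset.eq_empty_iff_forall_notMem]
      intro y hy
      have hyc := hNrS2 hy
      rw [Finset.mem_singleton] at hyc; subst hyc
      have := ha2.mp (Finset.mem_inter.mp hy).2
      rw [h] at this
      exact Bool.false_ne_true this
  refine ⟨D1 ∪ D2, S1 ∪ S2, Finset.union_subset_union hD1W hD2W,
    Finset.union_subset_union hS1W hS2W, ?_, ?_, ?_, ?_, ?_, ?_⟩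
  · intro hi; exact Finset.mem_union_left _ (hi1 hi)
  · intro v hv hcond
    rcases Finset.mem_union.mp hv with hvA | hvB
    · by_cases hvr : v = r
      · subst hvr
        have hd3 : d3 = true := by
          rcases hcond with h | h
          · exact h
          · exact absurd rfl h
        rcases hrdom hd3 with h | h | h
        · obtain ⟨u, hu, huv⟩ := hdom1 v hvA (Or.inl h)
          exact ⟨u, Finset.mem_union_left _ hu, huv⟩
        · exact ⟨v, Finset.mem_union_left _ (hi1 h), Or.inl rfl⟩
        · exact ⟨c, Finset.mem_union_right _ (hi2 h), Or.inr hrc.symm⟩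
      · obtain ⟨u, hu, huv⟩ := hdom1 v hvA (Or.inr hvr)
        exact ⟨u, Finset.mem_union_left _ hu, huv⟩
    · by_cases hvc : v = c
      · subst hvc
        rcases hcdom with h | h
        · obtain ⟨u, hu, huv⟩ := hdom2 v hvB (Or.inl h)
          exact ⟨u, Finset.mem_union_right _ hu, huv⟩
        · exact ⟨r, Finset.mem_union_left _ (hi1 h), Or.inr hrc⟩
      · obtain ⟨u, hu, huv⟩ := hdom2 v hvB (Or.inr hvc)
        exact ⟨u, Finset.mem_union_right _ hu, huv⟩
  · intro v hv
    rw [Finset.inter_union_distrib_left]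
    rcases Finset.mem_union.mp hv with hvA | hvB
    · by_cases hvr : v = r
      · subst hvr
        by_cases ha2' : a2 = true
        · have hb1' := hcb1 ha2'
          rw [hbb1.mpr hb1', Finset.empty_union]
          calc (G.neighborFinset v ∩ S2).card ≤ ({c} : Finset V).card :=
                Finset.card_le_card hNrS2
            _ = 1 := Finset.card_singleton c
        · have ha2f : a2 = false := by revert ha2'; cases a2 <;> simp
          rw [hs2iff.mpr ha2f, Finset.union_empty]
          exact hop1 v hvA
      · rw [hS2A v hvA hvr, Finset.union_empty]
        exact hop1 v hvA
    · by_cases hvc : v = c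
      · subst hvc
        by_cases ha1' : a1 = true
        · have hb2' := hcb2 ha1'
          rw [hbb2.mpr hb2', Finset.union_empty]
          calc (G.neighborFinset v ∩ S1).card ≤ ({r} : Finset V).card :=
                Finset.card_le_card hNcS1
            _ = 1 := Finset.card_singleton r
        · have hS1e : G.neighborFinset v ∩ S1 = ∅ := by
            rw [Finset.eq_empty_iff_forall_notMem]
            intro y hy
            have hyr := hNcS1 hy
            rw [Finset.mem_singleton] at hyr; subst hyr
            exact ha1' (ha1.mp (Finset.mem_inter.mp hy).2)
          rw [hS1e, Finset.empty_union]
          exact hop2 v hvB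
      · rw [hS1B v hvB hvc, Finset.empty_union]
        exact hop2 v hvB
  · constructor
    · intro h
      rcases Finset.mem_union.mp h with h | h
      · exact ha1.mp h
      · exact absurd (hS2W h) hrB
    · intro h; exact Finset.mem_union_left _ (ha1.mpr h)
  · rw [Finset.inter_union_distrib_left, Finset.union_eq_empty, hbb1, hs2iff, hb3]
    cases b1 <;> cases a2 <;> simp
  · have hD : Disjoint D1 D2 := hdisj.mono hD1W hD2W
    have hS : Disjoint S1 S2 := hdisj.mono hS1W hS2W
    rw [Finset.card_union_of_disjoint hD, Finset.card_union_of_disjoint hS]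
    push_cast
    linarith


lemma tree_phi (G : SimpleGraph V) [DecidableRel G.Adj] (hAc : G.IsAcyclic) :
    ∀ (n : ℕ) (W : Finset V) (r : V), W.card ≤ n → r ∈ W →
      (∀ x ∈ W, ∀ y ∈ W, ∃ p : G.Walk x y, ∀ z ∈ p.support, z ∈ W) →
      Phi G W r := by
  intro n
  induction n with
  | zero =>
    intro W r hcard hrW _
    have : 0 < W.card := Finset.card_pos.mpr ⟨r, hrW⟩
    omega
  | succ n ih =>
    intro W r hcard hrW hconn
    classical
    by_cases hone : W.card ≤ 1
    · have hW1 : W.card = 1 := le_antisymm hone (Finset.card_pos.mpr ⟨r, hrW⟩)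
      obtain ⟨a, ha⟩ := Finset.card_eq_one.mp hW1
      rw [ha] at hrW
      rw [Finset.mem_singleton] at hrW
      rw [ha, hrW]
      exact phi_singleton G a
    push_neg at hone
    obtain ⟨x, hxW, hxr⟩ := Finset.exists_mem_ne hone r
    obtain ⟨p0, hp0⟩ := hconn r hrW x hxW
    obtain ⟨c, hrc, hcW⟩ : ∃ c, G.Adj r c ∧ c ∈ W := by
      cases p0 with
      | nil => exact absurd rfl hxr
      | cons h q =>
        refine ⟨_, h, hp0 _ ?_⟩
        rw [SimpleGraph.Walk.support_cons]
        exact List.mem_cons_of_mem _ q.start_mem_support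
    set e : Sym2 V := s(r, c) with he
    set A : Finset V :=
      W.filter (fun v => ∃ p : G.Walk v r, (∀ z ∈ p.support, z ∈ W) ∧ e ∉ p.edges) with hAdef
    set B : Finset V :=
      W.filter (fun v => ∃ p : G.Walk v c, (∀ z ∈ p.support, z ∈ W) ∧ e ∉ p.edges) with hBdef
    have hrA : r ∈ A := by
      rw [hAdef, Finset.mem_filter]
      exact ⟨hrW, ⟨SimpleGraph.Walk.nil, by simpa using hrW, by simp⟩⟩
    have hcB : c ∈ B := by
      rw [hBdef, Finset.mem_filter]
      exact ⟨hcW, ⟨SimpleGraph.Walk.nil, by simpa using hcW, by simp⟩⟩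
    have hAsub : A ⊆ W := Finset.filter_subset _ _
    have hBsub : B ⊆ W := Finset.filter_subset _ _
    have hdisj : Disjoint A B := by
      rw [Finset.disjoint_left]
      intro v hvA hvB
      obtain ⟨p, hpW, hpe⟩ := (Finset.mem_filter.mp hvA).2
      obtain ⟨q, hqW, hqe⟩ := (Finset.mem_filter.mp hvB).2
      have hw : e ∉ (p.reverse.append q).edges := by
        rw [SimpleGraph.Walk.edges_append]
        intro hmem
        rcases List.mem_append.mp hmem with h | h
        · rw [SimpleGraph.Walk.edges_reverse] at h
          exact hpe (List.mem_reverse.mp h)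
        · exact hqe h
      have hP := SimpleGraph.isAcyclic_iff_path_unique.mp hAc
        ⟨(p.reverse.append q).bypass, SimpleGraph.Walk.bypass_isPath _⟩
        (SimpleGraph.Path.singleton hrc)
      have heq : (p.reverse.append q).bypass = SimpleGraph.Walk.cons hrc SimpleGraph.Walk.nil :=
        congrArg Subtype.val hP
      have : e ∈ (p.reverse.append q).bypass.edges := by
        rw [heq, SimpleGraph.Walk.edges_cons]
        exact List.mem_cons_self
      exact hw (SimpleGraph.Walk.edges_bypass_subset _ this)
    have hcA : c ∉ A := fun h => Finset.disjoint_left.mp hdisj h hcB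
    have hrB : r ∉ B := fun h => Finset.disjoint_left.mp hdisj hrA h
    have hstep : ∀ x y : V, x ∈ A ∪ B → y ∈ W → G.Adj x y → y ∈ A ∪ B := by
      intro x y hx hyW hadj
      by_cases hxy : s(x, y) = e
      · rw [he] at hxy
        rcases Sym2.eq_iff.mp hxy with ⟨h1, h2⟩ | ⟨h1, h2⟩
        · rw [h2]; exact Finset.mem_union_right _ hcB
        · rw [h2]; exact Finset.mem_union_left _ hrA
      · rcases Finset.mem_union.mp hx with hxm | hxm
        · obtain ⟨p, hpW, hpe⟩ := (Finset.mem_filter.mp hxm).2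
          refine Finset.mem_union_left _ (Finset.mem_filter.mpr ⟨hyW,
            ⟨SimpleGraph.Walk.cons hadj.symm p, ?_, ?_⟩⟩)
          · intro z hz
            rw [SimpleGraph.Walk.support_cons] at hz
            rcases List.mem_cons.mp hz with h | h
            · rw [h]; exact hyW
            · exact hpW z h
          · rw [SimpleGraph.Walk.edges_cons]
            intro hmem
            rcases List.mem_cons.mp hmem with h | h
            · apply hxy
              rw [h]; exact Sym2.eq_swap
            · exact hpe h
        · obtain ⟨p, hpW, hpe⟩ := (Finset.mem_filter.mp hxm).2
          refine Finset.mem_union_right _ (Finset.mem_filter.mpr ⟨hyW,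
            ⟨SimpleGraph.Walk.cons hadj.symm p, ?_, ?_⟩⟩)
          · intro z hz
            rw [SimpleGraph.Walk.support_cons] at hz
            rcases List.mem_cons.mp hz with h | h
            · rw [h]; exact hyW
            · exact hpW z h
          · rw [SimpleGraph.Walk.edges_cons]
            intro hmem
            rcases List.mem_cons.mp hmem with h | h
            · apply hxy
              rw [h]; exact Sym2.eq_swap
            · exact hpe h
    have claim : ∀ (u x : V) (q : G.Walk x u), x ∈ A ∪ B → (∀ z ∈ q.support, z ∈ W) →
        u ∈ A ∪ B := by
      intro u x q
      induction q with
      | nil => intro h _; exact h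
      | cons hadj q ihq =>
        intro hx hsup
        apply ihq
        · refine hstep _ _ hx (hsup _ ?_) hadj
          rw [SimpleGraph.Walk.support_cons]
          exact List.mem_cons_of_mem _ q.start_mem_support
        · intro z hz
          refine hsup z ?_
          rw [SimpleGraph.Walk.support_cons]
          exact List.mem_cons_of_mem _ hz
    have hcover : W ⊆ A ∪ B := by
      intro v hv
      obtain ⟨p, hp⟩ := hconn r hrW v hv
      exact claim v r p (Finset.mem_union_left _ hrA) hp
    have hcross : ∀ x ∈ A, ∀ y ∈ B, G.Adj x y → x = r ∧ y = c := by
      intro x hxA y hyB hadj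
      by_cases hxy : s(x, y) = e
      · rw [he] at hxy
        rcases Sym2.eq_iff.mp hxy with ⟨h1, h2⟩ | ⟨h1, h2⟩
        · exact ⟨h1, h2⟩
        · exfalso; rw [h1] at hxA; exact hcA hxA
      · exfalso
        have hyA : y ∈ A := by
          obtain ⟨p, hpW, hpe⟩ := (Finset.mem_filter.mp hxA).2
          refine Finset.mem_filter.mpr ⟨hBsub hyB, ⟨SimpleGraph.Walk.cons hadj.symm p, ?_, ?_⟩⟩
          · intro z hz
            rw [SimpleGraph.Walk.support_cons] at hz
            rcases List.mem_cons.mp hz with h | h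
            · rw [h]; exact hBsub hyB
            · exact hpW z h
          · rw [SimpleGraph.Walk.edges_cons]
            intro hmem
            rcases List.mem_cons.mp hmem with h | h
            · apply hxy
              rw [h]; exact Sym2.eq_swap
            · exact hpe h
        exact Finset.disjoint_left.mp hdisj hyA hyB
    have hAconn : ∀ x ∈ A, ∀ y ∈ A, ∃ p : G.Walk x y, ∀ z ∈ p.support, z ∈ A := by
      have hsupA : ∀ v ∈ A, ∃ p : G.Walk v r, ∀ z ∈ p.support, z ∈ A := by
        intro v hv
        obtain ⟨p, hpW, hpe⟩ := (Finset.mem_filter.mp hv).2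
        refine ⟨p, fun z hz => Finset.mem_filter.mpr ⟨hpW z hz,
          ⟨p.dropUntil z hz, fun w hw => hpW w (SimpleGraph.Walk.support_dropUntil_subset _ hz hw),
            fun hmem => hpe (SimpleGraph.Walk.edges_dropUntil_subset _ hz hmem)⟩⟩⟩
      intro x hx y hy
      obtain ⟨p, hp⟩ := hsupA x hx
      obtain ⟨q, hq⟩ := hsupA y hy
      refine ⟨p.append q.reverse, fun z hz => ?_⟩
      rw [SimpleGraph.Walk.support_append] at hz
      rcases List.mem_append.mp hz with h | h
      · exact hp z h
      · have h2 : z ∈ q.reverse.support := List.mem_of_mem_tail h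
        rw [SimpleGraph.Walk.support_reverse] at h2
        exact hq z (List.mem_reverse.mp h2)
    have hBconn : ∀ x ∈ B, ∀ y ∈ B, ∃ p : G.Walk x y, ∀ z ∈ p.support, z ∈ B := by
      have hsupB : ∀ v ∈ B, ∃ p : G.Walk v c, ∀ z ∈ p.support, z ∈ B := by
        intro v hv
        obtain ⟨p, hpW, hpe⟩ := (Finset.mem_filter.mp hv).2
        refine ⟨p, fun z hz => Finset.mem_filter.mpr ⟨hpW z hz,
          ⟨p.dropUntil z hz, fun w hw => hpW w (SimpleGraph.Walk.support_dropUntil_subset _ hz hw),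
            fun hmem => hpe (SimpleGraph.Walk.edges_dropUntil_subset _ hz hmem)⟩⟩⟩
      intro x hx y hy
      obtain ⟨p, hp⟩ := hsupB x hx
      obtain ⟨q, hq⟩ := hsupB y hy
      refine ⟨p.append q.reverse, fun z hz => ?_⟩
      rw [SimpleGraph.Walk.support_append] at hz
      rcases List.mem_append.mp hz with h | h
      · exact hp z h
      · have h2 : z ∈ q.reverse.support := List.mem_of_mem_tail h
        rw [SimpleGraph.Walk.support_reverse] at h2
        exact hq z (List.mem_reverse.mp h2)
    have hAcard : A.card ≤ n := by
      have : A.card < W.card := Finset.card_lt_card ⟨hAsub, fun h => hcA (h hcW)⟩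
      omega
    have hBcard : B.card ≤ n := by
      have : B.card < W.card := Finset.card_lt_card ⟨hBsub, fun h => hrB (h hrW)⟩
      omega
    have hWAB : W = A ∪ B := le_antisymm hcover (Finset.union_subset hAsub hBsub)
    have hPA := ih A r hAcard hrA hAconn
    have hPB := ih B c hBcard hcB hBconn
    rw [hWAB]
    rcases hPA with ⟨hA1, hA2, hA3, hA4⟩ | ⟨hA1, hA2⟩ | ⟨hA1, hA2⟩ <;>
      rcases hPB with ⟨hB1, hB2, hB3, hB4⟩ | ⟨hB1, hB2⟩ | ⟨hB1, hB2⟩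
    · exact Or.inr (Or.inl
        ⟨glue G hdisj hrA hcB hrc hcross hA2 hB4 (by decide) (by decide) (by decide)
          (by decide) rfl (by norm_num),
        glue G hdisj hrA hcB hrc hcross hA2 hB3 (by decide) (by decide) (by decide)
          (by decide) rfl (by norm_num)⟩)
    · exact Or.inr (Or.inr
        ⟨glue G hdisj hrA hcB hrc hcross hA2 hB2 (by decide) (by decide) (by decide)
          (by decide) rfl (by norm_num),
        glue G hdisj hrA hcB hrc hcross hA4 hB2 (by decide) (by decide) (by decide)
          (by decide) rfl (by norm_num)⟩)
    · exact Or.inl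
        ⟨glue G hdisj hrA hcB hrc hcross hA1 hB2 (by decide) (by decide) (by decide)
          (by decide) rfl (by norm_num),
        glue G hdisj hrA hcB hrc hcross hA2 hB2 (by decide) (by decide) (by decide)
          (by decide) rfl (by norm_num),
        glue G hdisj hrA hcB hrc hcross hA3 hB2 (by decide) (by decide) (by decide)
          (by decide) rfl (by norm_num),
        glue G hdisj hrA hcB hrc hcross hA4 hB2 (by decide) (by decide) (by decide)
          (by decide) rfl (by norm_num)⟩
    · exact Or.inr (Or.inl
        ⟨glue G hdisj hrA hcB hrc hcross hA1 hB4 (by decide) (by decide) (by decide)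
          (by decide) rfl (by norm_num),
        glue G hdisj hrA hcB hrc hcross hA1 hB3 (by decide) (by decide) (by decide)
          (by decide) rfl (by norm_num)⟩)
    · exact Or.inr (Or.inl
        ⟨glue G hdisj hrA hcB hrc hcross hA1 hB2 (by decide) (by decide) (by decide)
          (by decide) rfl (by norm_num),
        glue G hdisj hrA hcB hrc hcross hA2 hB2 (by decide) (by decide) (by decide)
          (by decide) rfl (by norm_num)⟩)
    · exact Or.inr (Or.inl
        ⟨glue G hdisj hrA hcB hrc hcross hA1 hB2 (by decide) (by decide) (by decide)
          (by decide) rfl (by norm_num),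
        glue G hdisj hrA hcB hrc hcross hA2 hB2 (by decide) (by decide) (by decide)
          (by decide) rfl (by norm_num)⟩)
    · exact Or.inr (Or.inl
        ⟨glue G hdisj hrA hcB hrc hcross hA1 hB4 (by decide) (by decide) (by decide)
          (by decide) rfl (by norm_num),
        glue G hdisj hrA hcB hrc hcross hA1 hB3 (by decide) (by decide) (by decide)
          (by decide) rfl (by norm_num)⟩)
    · exact Or.inr (Or.inr
        ⟨glue G hdisj hrA hcB hrc hcross hA1 hB2 (by decide) (by decide) (by decide)
          (by decide) rfl (by norm_num),
        glue G hdisj hrA hcB hrc hcross hA2 hB2 (by decide) (by decide) (by decide)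
          (by decide) rfl (by norm_num)⟩)
    · exact Or.inr (Or.inr
        ⟨glue G hdisj hrA hcB hrc hcross hA1 hB2 (by decide) (by decide) (by decide)
          (by decide) rfl (by norm_num),
        glue G hdisj hrA hcB hrc hcross hA2 hB2 (by decide) (by decide) (by decide)
          (by decide) rfl (by norm_num)⟩)

lemma exists_dom_openPack (G : SimpleGraph V) [DecidableRel G.Adj] (hT : G.IsTree)
    (hc : 1 ≤ Fintype.card V) :
    ∃ D S : Finset V, (∀ v : V, ∃ u ∈ D, u = v ∨ G.Adj u v) ∧
      (∀ v : V, (G.neighborFinset v ∩ S).card ≤ 1) ∧ D.card ≤ S.card := by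
  have hne : Nonempty V := Fintype.card_pos_iff.mp (by omega)
  obtain ⟨r⟩ := hne
  have hphi := tree_phi G hT.2 (Fintype.card V) Finset.univ r
    (by rw [Finset.card_univ]) (Finset.mem_univ r)
    (fun x _ y _ => ((hT.1.preconnected x y).elim
      fun p => ⟨p, fun z _ => Finset.mem_univ z⟩))
  have get : ∀ (i a b : Bool), At G Finset.univ r i true a b 0 →
      ∃ D S : Finset V, (∀ v : V, ∃ u ∈ D, u = v ∨ G.Adj u v) ∧
        (∀ v : V, (G.neighborFinset v ∩ S).card ≤ 1) ∧ D.card ≤ S.card := by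
    intro i a b h
    obtain ⟨D, S, _, _, _, hdom, hop, _, _, hk⟩ := h
    refine ⟨D, S, fun v => hdom v (Finset.mem_univ v) (Or.inl rfl),
      fun v => hop v (Finset.mem_univ v), ?_⟩
    exact_mod_cast (by linarith : (D.card : ℤ) ≤ (S.card : ℤ))
  rcases hphi with ⟨h1, _, _, _⟩ | ⟨_, h2⟩ | ⟨_, h2⟩
  · exact get _ _ _ h1
  · exact get _ _ _ h2
  · exact get _ _ _ h2


end OPL2Aux

theorem stmt_18 :
    (∀ (V : Type*) [Fintype V] [DecidableEq V] (G : SimpleGraph V)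
        [DecidableRel G.Adj],
      (∀ S : Finset V, openPack G S → limPack G 2 S) ∧
        openPackNum G ≤ limPackNum G 2) ∧
    (∀ (V : Type*) [Fintype V] [DecidableEq V] (T : SimpleGraph V)
        [DecidableRel T.Adj], T.IsTree → 2 ≤ Fintype.card V →
      limPackNum T 2 ≤ 2 * openPackNum T) := by
  constructor
  · intro V _ _ G _
    have hOL : ∀ S : Finset V, openPack G S → limPack G 2 S := by
      intro S hS v
      have hsub : insert v (G.neighborFinset v) ∩ S ⊆
          insert v (G.neighborFinset v ∩ S) := by
        intro y hy
        rw [Finset.mem_inter, Finset.mem_insert] at hy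
        rcases hy.1 with h | h
        · rw [h]; exact Finset.mem_insert_self _ _
        · exact Finset.mem_insert_of_mem (Finset.mem_inter.mpr ⟨h, hy.2⟩)
      calc (insert v (G.neighborFinset v) ∩ S).card
          ≤ (insert v (G.neighborFinset v ∩ S)).card := Finset.card_le_card hsub
        _ ≤ (G.neighborFinset v ∩ S).card + 1 := Finset.card_insert_le _ _
        _ ≤ 2 := by have := hS v; omega
    refine ⟨hOL, ?_⟩
    apply csSup_le_csSup
    · refine ⟨Fintype.card V, ?_⟩
      rintro n ⟨B, _, rfl⟩
      calc B.card ≤ Finset.univ.card := Finset.card_le_univ B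
        _ = Fintype.card V := Finset.card_univ
    · exact ⟨0, ∅, fun v => by simp, rfl⟩
    · rintro n ⟨S, hS, rfl⟩
      exact ⟨S, hOL S hS, rfl⟩
  · intro V _ _ T _ hT hcard
    obtain ⟨D, S, hdom, hop, hDS⟩ := OPL2Aux.exists_dom_openPack T hT (by omega)
    have hSopen : openPack T S := hop
    have hSle : S.card ≤ openPackNum T := by
      apply le_csSup
      · refine ⟨Fintype.card V, ?_⟩
        rintro n ⟨S', _, rfl⟩
        calc S'.card ≤ Finset.univ.card := Finset.card_le_univ S'
          _ = Fintype.card V := Finset.card_univ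
      · exact ⟨S, hSopen, rfl⟩
    apply csSup_le
    · exact ⟨0, ∅, fun v => by simp, rfl⟩
    rintro n ⟨B, hB, rfl⟩
    have hBD : B.card ≤ 2 * D.card := by
      have hsub : B ⊆ D.biUnion (fun d => insert d (T.neighborFinset d) ∩ B) := by
        intro b hb
        obtain ⟨u, hu, h⟩ := hdom b
        refine Finset.mem_biUnion.mpr ⟨u, hu, Finset.mem_inter.mpr ⟨?_, hb⟩⟩
        rcases h with h | h
        · rw [← h]; exact Finset.mem_insert_self _ _
        · exact Finset.mem_insert_of_mem ((SimpleGraph.mem_neighborFinset _ _ _).mpr h)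
      calc B.card ≤ (D.biUnion (fun d => insert d (T.neighborFinset d) ∩ B)).card :=
            Finset.card_le_card hsub
        _ ≤ ∑ d ∈ D, (insert d (T.neighborFinset d) ∩ B).card := Finset.card_biUnion_le
        _ ≤ ∑ _d ∈ D, 2 := Finset.sum_le_sum (fun d _ => hB d)
        _ = 2 * D.card := by rw [Finset.sum_const, smul_eq_mul, mul_comm]
    calc B.card ≤ 2 * D.card := hBD
      _ ≤ 2 * S.card := by omega
      _ ≤ 2 * openPackNum T := by omega
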